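/- For all n \geq 1 and c with n^2 - n + 1 < c, the matrix multiplication tensor M_n does not restrict to the polynomial multiplication tensor P_{2,c-1}; i.e., there are no linear maps A, B, C with (A \otimes B \otimes C) M_n = P_{2,c-1}. -/
import Mathlib


open scoped BigOperators

/-- Contraction of the first index of a 3-tensor with a covector, giving a matrix. -/
noncomputable def contr1 {ι₁ ι₂ ι₃ : Type*} [Fintype ι₁]
    (β : ι₁ → ℂ) (T : ι₁ → ι₂ → ι₃ → ℂ) : Matrix ι₂ ι₃ ℂ :=
  Matrix.of fun j k => ∑ i, β i * T i j k

/-- Contraction of the second index. -/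
noncomputable def contr2 {ι₁ ι₂ ι₃ : Type*} [Fintype ι₂]
    (γ : ι₂ → ℂ) (T : ι₁ → ι₂ → ι₃ → ℂ) : Matrix ι₁ ι₃ ℂ :=
  Matrix.of fun i k => ∑ j, γ j * T i j k

/-- Contraction of the third index. -/
noncomputable def contr3 {ι₁ ι₂ ι₃ : Type*} [Fintype ι₃]
    (δ : ι₃ → ℂ) (T : ι₁ → ι₂ → ι₃ → ℂ) : Matrix ι₁ ι₂ ℂ :=
  Matrix.of fun i j => ∑ k, δ k * T i j k

/-- Restriction `(A ⊗ B ⊗ C) T` of a 3-tensor. -/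
noncomputable def restrict {ι₁ ι₂ ι₃ κ₁ κ₂ κ₃ : Type*}
    [Fintype ι₁] [Fintype ι₂] [Fintype ι₃]
    (A : Matrix κ₁ ι₁ ℂ) (B : Matrix κ₂ ι₂ ℂ) (C : Matrix κ₃ ι₃ ℂ)
    (T : ι₁ → ι₂ → ι₃ → ℂ) : κ₁ → κ₂ → κ₃ → ℂ :=
  fun x y z => ∑ i, ∑ j, ∑ k, A x i * B y j * C z k * T i j k

/-- The polynomial multiplication tensor `P_{a,b}` (zero-based indices). -/
noncomputable def polyMul (a b : ℕ) : Fin a → Fin b → Fin (a + b - 1) → ℂ :=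
  fun i j k => if (k : ℕ) = (i : ℕ) + (j : ℕ) then 1 else 0

/-- The unit tensor `⟨r⟩`. -/
noncomputable def unitTensor (r : ℕ) : Fin r → Fin r → Fin r → ℂ :=
  fun i j k => if i = j ∧ j = k then 1 else 0

/-- The matrix multiplication tensor `M_n`. -/
noncomputable def MM (n : ℕ) :
    (Fin n × Fin n) → (Fin n × Fin n) → (Fin n × Fin n) → ℂ :=
  fun p q r => if p.2 = q.1 ∧ q.2 = r.1 ∧ r.2 = p.1 then 1 else 0

/-- Minrank of a 3-tensor (w.r.t. first-index slices). -/
noncomputable def minrank {a b c : ℕ} (T : Fin a → Fin b → Fin c → ℂ) : ℕ :=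
  sInf {r | ∃ β : Fin a → ℂ, contr1 β T ≠ 0 ∧ (contr1 β T).rank = r}

/-- A tensor is concise if all three flattenings are injective, i.e. all nonzero
contractions are nonzero matrices. -/
def Concise {a b c : ℕ} (T : Fin a → Fin b → Fin c → ℂ) : Prop :=
  (∀ β : Fin a → ℂ, β ≠ 0 → contr1 β T ≠ 0) ∧
  (∀ γ : Fin b → ℂ, γ ≠ 0 → contr2 γ T ≠ 0) ∧
  (∀ δ : Fin c → ℂ, δ ≠ 0 → contr3 δ T ≠ 0)

/-- Gram matrix of the first flattening, `T₁^* T₁`. -/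
noncomputable def gram1 {ι₁ ι₂ ι₃ : Type*} [Fintype ι₂] [Fintype ι₃]
    (T : ι₁ → ι₂ → ι₃ → ℂ) : Matrix ι₁ ι₁ ℂ :=
  Matrix.of fun i i' => ∑ j, ∑ k, (starRingEnd ℂ) (T i j k) * T i' j k

/-- Gram matrix of the second flattening. -/
noncomputable def gram2 {ι₁ ι₂ ι₃ : Type*} [Fintype ι₁] [Fintype ι₃]
    (T : ι₁ → ι₂ → ι₃ → ℂ) : Matrix ι₂ ι₂ ℂ :=
  Matrix.of fun j j' => ∑ i, ∑ k, (starRingEnd ℂ) (T i j k) * T i j' k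

/-- Gram matrix of the third flattening. -/
noncomputable def gram3 {ι₁ ι₂ ι₃ : Type*} [Fintype ι₁] [Fintype ι₂]
    (T : ι₁ → ι₂ → ι₃ → ℂ) : Matrix ι₃ ι₃ ℂ :=
  Matrix.of fun k k' => ∑ i, ∑ j, (starRingEnd ℂ) (T i j k) * T i j k'

/-- The tensor `M_{a,1,b}`. -/
noncomputable def Mab (a b : ℕ) : Fin a → Fin b → (Fin b × Fin a) → ℂ :=
  fun i k p => if p = (k, i) then 1 else 0

/-- The antisymmetric tensor `e₁ ∧ e₂ ∧ e₃`. -/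
noncomputable def wedge : Fin 3 → Fin 3 → Fin 3 → ℂ :=
  fun i j k => ∑ σ : Equiv.Perm (Fin 3),
    ((Equiv.Perm.sign σ : ℤ) : ℂ) * (if i = σ 0 ∧ j = σ 1 ∧ k = σ 2 then 1 else 0)

/-- The iterated matrix multiplication tensor of order `k`. -/
noncomputable def IMM (n k : ℕ) : (Fin k → Fin n × Fin n) → ℂ :=
  fun x => ∑ i : Fin k → Fin n, if ∀ ℓ : Fin k, x ℓ = (i ℓ, i ⟨((ℓ : ℕ) + 1) % k, Nat.mod_lt _ ℓ.pos⟩) then 1 else 0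

/-- Restriction of an order-`k` tensor by applying a linear map to each factor. -/
noncomputable def restrictK {k : ℕ} {ι κ : Fin k → Type*} [∀ ℓ, Fintype (ι ℓ)]
    (A : ∀ ℓ, Matrix (κ ℓ) (ι ℓ) ℂ) (T : (∀ ℓ, ι ℓ) → ℂ) : (∀ ℓ, κ ℓ) → ℂ :=
  fun x => ∑ y : ∀ ℓ, ι ℓ, (∏ ℓ, A ℓ (x ℓ) (y ℓ)) * T y


section AuxLemmas

lemma aux_contr1_restrict {ι₁ ι₂ ι₃ κ₁ κ₂ κ₃ : Type*}
    [Fintype ι₁] [Fintype ι₂] [Fintype ι₃] [Fintype κ₁]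
    (A : Matrix κ₁ ι₁ ℂ) (B : Matrix κ₂ ι₂ ℂ) (C : Matrix κ₃ ι₃ ℂ)
    (T : ι₁ → ι₂ → ι₃ → ℂ) (β : κ₁ → ℂ) :
    contr1 β (restrict A B C T) =
      B * contr1 (fun i => ∑ x, β x * A x i) T * C.transpose := by
  ext y z
  simp only [contr1, restrict, Matrix.mul_apply, Matrix.of_apply, Matrix.transpose_apply,
    Finset.mul_sum, Finset.sum_mul]
  conv_lhs => enter [2,x,2,i]; rw [Finset.sum_comm]
  conv_lhs => enter [2,x]; rw [Finset.sum_comm]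
  conv_lhs => rw [Finset.sum_comm]
  refine Finset.sum_congr rfl fun k _ => ?_
  conv_lhs => enter [2,x]; rw [Finset.sum_comm]
  conv_lhs => rw [Finset.sum_comm]
  refine Finset.sum_congr rfl fun j _ => ?_
  rw [Finset.sum_comm]
  refine Finset.sum_congr rfl fun i _ => ?_
  refine Finset.sum_congr rfl fun x _ => ?_
  ring

lemma aux_exists_singular_comb {n : ℕ} (hn : 1 ≤ n) (X0 X1 : Matrix (Fin n) (Fin n) ℂ) :
    ∃ β : Fin 2 → ℂ, β ≠ 0 ∧ (β 0 • X0 + β 1 • X1).det = 0 := by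
  by_cases h1 : X1.det = 0
  · refine ⟨![0, 1], ?_, ?_⟩
    · intro h; have := congrFun h 1; simp at this
    · simp [h1]
  · haveI : NeZero n := ⟨by omega⟩
    have hunit : IsUnit X1.det := isUnit_iff_ne_zero.mpr h1
    set Y : Matrix (Fin n) (Fin n) ℂ := -(X1⁻¹ * X0) with hY
    obtain ⟨μ, hμ⟩ := Module.End.exists_eigenvalue (Matrix.mulVecLin Y)
    obtain ⟨v, hv⟩ := hμ.exists_hasEigenvector
    have h2 : Y.mulVec v = μ • v := hv.apply_eq_smul
    refine ⟨![1, μ], ?_, ?_⟩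
    · intro h; have := congrFun h 0; simp at this
    · rw [← Matrix.exists_mulVec_eq_zero_iff]
      refine ⟨v, hv.2, ?_⟩
      have h4 : (X1⁻¹ * X0).mulVec v = -(μ • v) := by
        rw [hY, Matrix.neg_mulVec] at h2
        exact neg_eq_iff_eq_neg.mp h2
      have h5 : X0.mulVec v = -(μ • X1.mulVec v) := by
        calc X0.mulVec v = (X1 * (X1⁻¹ * X0)).mulVec v := by
              rw [← Matrix.mul_assoc, Matrix.mul_nonsing_inv _ hunit, Matrix.one_mul]
          _ = X1.mulVec ((X1⁻¹ * X0).mulVec v) := (Matrix.mulVec_mulVec _ _ _).symm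
          _ = X1.mulVec (-(μ • v)) := by rw [h4]
          _ = -(μ • X1.mulVec v) := by rw [Matrix.mulVec_neg, Matrix.mulVec_smul]
      simp [Matrix.add_mulVec, Matrix.smul_mulVec, h5]

lemma aux_rank_shift_le {n : ℕ} (X : Matrix (Fin n) (Fin n) ℂ) (hdet : X.det = 0)
    (N : Matrix (Fin n × Fin n) (Fin n × Fin n) ℂ)
    (hN : ∀ q r, N q r = if q.2 = r.1 then X q.1 r.2 else 0) :
    N.rank ≤ n * n - n := by
  classical
  obtain ⟨u, hu0, hu⟩ := Matrix.exists_mulVec_eq_zero_iff.mpr hdet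
  set v : Fin n → (Fin n × Fin n → ℂ) :=
    fun b r => if r.1 = b then u r.2 else 0 with hv
  have hker : ∀ b, v b ∈ LinearMap.ker N.mulVecLin := by
    intro b
    rw [LinearMap.mem_ker, Matrix.mulVecLin_apply]
    ext q
    have step : ∀ r : Fin n × Fin n, N q r * v b r =
        if r.1 = b then (if q.2 = r.1 then X q.1 r.2 * u r.2 else 0) else 0 := by
      intro r
      simp only [hN, hv]
      by_cases h1 : r.1 = b <;> by_cases h2 : q.2 = r.1 <;> simp [h1, h2]
    calc N.mulVec (v b) q = ∑ r : Fin n × Fin n, N q r * v b r := by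
          rw [Matrix.mulVec, dotProduct]
      _ = ∑ r : Fin n × Fin n,
            (if r.1 = b then (if q.2 = r.1 then X q.1 r.2 * u r.2 else 0) else 0) :=
          Finset.sum_congr rfl fun r _ => step r
      _ = ∑ r2 : Fin n, (if q.2 = b then X q.1 r2 * u r2 else 0) := by
          rw [Fintype.sum_prod_type]
          rw [Finset.sum_eq_single b]
          · simp
          · intro r1 _ hr1; simp [hr1]
          · simp
      _ = 0 := by
          by_cases hq : q.2 = b
          · simp only [hq, if_true]
            have := congrFun hu q.1
            rw [Matrix.mulVec, dotProduct] at this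
            simpa using this
          · simp [hq]
  have hli : LinearIndependent ℂ v := by
    rw [Fintype.linearIndependent_iff]
    intro c hc b
    obtain ⟨j0, hj0⟩ : ∃ j0, u j0 ≠ 0 := by
      by_contra h; push_neg at h; exact hu0 (funext h)
    have h := congrFun hc (b, j0)
    simp only [hv, Finset.sum_apply, Pi.smul_apply, smul_eq_mul, Pi.zero_apply] at h
    rw [Finset.sum_eq_single b] at h
    · simp at h
      rcases h with h | h
      · exact h
      · exact absurd h hj0
    · intro b' _ hb'; simp [Ne.symm hb']
    · simp
  have hspan : Submodule.span ℂ (Set.range v) ≤ LinearMap.ker N.mulVecLin := by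
    rw [Submodule.span_le]; rintro _ ⟨b, rfl⟩; exact hker b
  have h1 : n ≤ Module.finrank ℂ (LinearMap.ker N.mulVecLin) := by
    have h2 := finrank_span_eq_card hli
    have h3 := Submodule.finrank_mono hspan
    rw [h2] at h3
    simpa using h3
  have h4 := LinearMap.finrank_range_add_finrank_ker N.mulVecLin
  rw [Module.finrank_fintype_fun_eq_card] at h4
  simp only [Fintype.card_prod, Fintype.card_fin] at h4
  rw [Matrix.rank]
  omega

lemma aux_rank_band_lower {d e : ℕ} (M : Matrix (Fin d) (Fin e) ℂ) (β : Fin 2 → ℂ)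
    (hM : ∀ (j : Fin d) (k : Fin e), M j k =
      β 0 * (if (k : ℕ) = (j : ℕ) then 1 else 0) +
      β 1 * (if (k : ℕ) = 1 + (j : ℕ) then 1 else 0))
    (hβ : β ≠ 0) (he : d + 1 ≤ e) : d ≤ M.rank := by
  classical
  have hcases : β 0 ≠ 0 ∨ β 1 ≠ 0 := by
    by_contra h
    push_neg at h
    apply hβ
    funext x
    fin_cases x <;> simp [h.1, h.2]
  -- choose the offset
  obtain ⟨o, ho, hdiag, hlow⟩ :
      ∃ o : ℕ, o ≤ 1 ∧
        (β 0 * (if o = 0 then 1 else 0) + β 1 * (if o = 1 then 1 else 0)) ≠ 0 ∧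
        (∀ (j : Fin d) (j' : Fin d), (j' : ℕ) < (j : ℕ) →
          β 0 * (if (j' : ℕ) + o = (j : ℕ) then 1 else 0) +
          β 1 * (if (j' : ℕ) + o = 1 + (j : ℕ) then 1 else 0) = 0) := by
    rcases hcases with h0 | h1
    · refine ⟨0, le_refl _ |>.trans (by omega), by simpa using h0, ?_⟩
      intro j j' hlt
      rw [if_neg (by omega), if_neg (by omega)]
      ring
    · by_cases h0 : β 0 = 0
      · refine ⟨1, le_refl 1, by simpa [h0] using h1, ?_⟩
        intro j j' hlt
        have h2 : ¬((j' : ℕ) + 1 = 1 + (j : ℕ)) := by omega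
        simp [h0, h2]
      · refine ⟨0, by omega, by simpa using h0, ?_⟩
        intro j j' hlt
        rw [if_neg (by omega), if_neg (by omega)]
        ring
  set E : Matrix (Fin e) (Fin d) ℂ :=
    Matrix.of fun k j' => if (k : ℕ) = (j' : ℕ) + o then 1 else 0 with hE
  set S := M * E with hSdef
  have hS : ∀ j j', S j j' =
      β 0 * (if (j' : ℕ) + o = (j : ℕ) then 1 else 0) +
      β 1 * (if (j' : ℕ) + o = 1 + (j : ℕ) then 1 else 0) := by
    intro j j'
    have hlt : (j' : ℕ) + o < e := by omega
    rw [hSdef, Matrix.mul_apply]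
    rw [Finset.sum_eq_single (⟨(j' : ℕ) + o, hlt⟩ : Fin e)]
    · rw [hM, hE]
      simp
    · intro k _ hk
      have : (k : ℕ) ≠ (j' : ℕ) + o := by
        intro hkk; exact hk (Fin.ext hkk)
      rw [hE]
      simp [this]
    · simp
  have htri : S.BlockTriangular id := by
    intro j j' hlt
    rw [hS]
    exact hlow j j' hlt
  have hdet : S.det ≠ 0 := by
    rw [Matrix.det_of_upperTriangular htri]
    have hdd : ∀ j : Fin d, S j j =
        β 0 * (if o = 0 then 1 else 0) + β 1 * (if o = 1 then 1 else 0) := by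
      intro j
      rw [hS]
      congr 2
      · by_cases h : o = 0 <;> simp [h]
      · by_cases h : o = 1 <;> simp [h] <;> omega
    rw [Finset.prod_congr rfl fun j _ => hdd j, Finset.prod_const]
    exact pow_ne_zero _ hdiag
  have hunit : IsUnit S := (Matrix.isUnit_iff_isUnit_det S).mpr (isUnit_iff_ne_zero.mpr hdet)
  have hrankS : S.rank = d := by
    rw [Matrix.rank_of_isUnit S hunit, Fintype.card_fin]
  calc d = S.rank := hrankS.symm
    _ ≤ M.rank := Matrix.rank_mul_le_left M E

end AuxLemmas

theorem MM_not_restrict_polyMul_two (n c : ℕ) (hn : 1 ≤ n)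
    (hc : n ^ 2 - n + 1 < c) :
    ¬ ∃ (A : Matrix (Fin 2) (Fin n × Fin n) ℂ)
        (B : Matrix (Fin (c - 1)) (Fin n × Fin n) ℂ)
        (C : Matrix (Fin (2 + (c - 1) - 1)) (Fin n × Fin n) ℂ),
        restrict A B C (MM n) = polyMul 2 (c - 1) := by
  have hp : n ^ 2 = n * n := pow_two n
  rintro ⟨A, B, C, hABC⟩
  set X0 : Matrix (Fin n) (Fin n) ℂ := Matrix.of fun a b => A 0 (b, a) with hX0
  set X1 : Matrix (Fin n) (Fin n) ℂ := Matrix.of fun a b => A 1 (b, a) with hX1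
  obtain ⟨β, hβ, hdet⟩ := aux_exists_singular_comb hn X0 X1
  have hN : ∀ q r, contr1 (fun i => ∑ x, β x * A x i) (MM n) q r =
      if q.2 = r.1 then (β 0 • X0 + β 1 • X1) q.1 r.2 else 0 := by
    intro q r
    show (∑ p : Fin n × Fin n, (∑ x, β x * A x p) * MM n p q r) = _
    rw [Fintype.sum_prod_type]
    by_cases hqr : q.2 = r.1
    · rw [Finset.sum_eq_single r.2]
      · rw [Finset.sum_eq_single q.1]
        · simp [MM, hqr, hX0, hX1, Fin.sum_univ_two]
        · intro p2 _ hp2; simp [MM, hp2]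
        · simp
      · intro p1 _ hp1
        apply Finset.sum_eq_zero
        intro p2 _
        simp [MM, Ne.symm hp1]
      · simp
    · simp [MM, hqr]
  have hrankN := aux_rank_shift_le _ hdet _ hN
  have hMeq : contr1 β (polyMul 2 (c - 1)) =
      B * (contr1 (fun i => ∑ x, β x * A x i) (MM n) * C.transpose) := by
    rw [← hABC, aux_contr1_restrict, Matrix.mul_assoc]
  have hup : (contr1 β (polyMul 2 (c - 1))).rank ≤ n * n - n := by
    rw [hMeq]
    exact le_trans (Matrix.rank_mul_le_right _ _)
      (le_trans (Matrix.rank_mul_le_left _ _) hrankN)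
  have hMentry : ∀ (j : Fin (c - 1)) (k : Fin (2 + (c - 1) - 1)),
      contr1 β (polyMul 2 (c - 1)) j k =
        β 0 * (if (k : ℕ) = (j : ℕ) then 1 else 0) +
        β 1 * (if (k : ℕ) = 1 + (j : ℕ) then 1 else 0) := by
    intro j k
    show (∑ i : Fin 2, β i * polyMul 2 (c - 1) i j k) = _
    simp [polyMul, Fin.sum_univ_two]
  have hlow := aux_rank_band_lower _ β hMentry hβ (by omega)
  have hfinal := le_trans hlow hup
  omega
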